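/- arXiv:hep-th/0602256 — 2 statements merged into one kernel-verified Lean document; each statement's English description precedes it below -/
import Mathlib

section
/- Let n ≥ 2 and let g_1, …, g_n : ℝⁿ \ {0} → ℝ be continuously differentiable functions, each positively homogeneous of degree 1 − n, and set a(ξ) = Σ_{j=1}^{n} ∂g_j/∂ξ_j (ξ). Then the integral of a over the unit sphere with respect to the (n−1)-dimensional surface measure vanishes: ∫_{|ξ|=1} a(ξ) dσ(ξ) = 0. -/
open MeasureTheory

section AuxLemmas

open Set Metric Measure

noncomputable abbrev Esp (n : ℕ) := EuclideanSpace ℝ (Fin n)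

lemma integral_fderiv_apply_eq_zero {n : ℕ} (h : EuclideanSpace ℝ (Fin n) → ℝ)
    (hh : ContDiff ℝ 1 h) (hc : HasCompactSupport h) (v : EuclideanSpace ℝ (Fin n)) :
    ∫ x, fderiv ℝ h x v = 0 := by
  obtain ⟨R, hR⟩ : ∃ R, tsupport h ⊆ closedBall 0 R :=
    hc.isBounded.subset_closedBall 0
  obtain ⟨C, hC⟩ : ∃ C, ∀ x, ‖fderiv ℝ h x‖ ≤ C :=
    (hh.continuous_fderiv one_ne_zero).bounded_above_of_compact_support (hc.fderiv (𝕜 := ℝ))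
  have hC0 : 0 ≤ C := le_trans (norm_nonneg _) (hC 0)
  set F : ℝ → EuclideanSpace ℝ (Fin n) → ℝ := fun t x => h (x + t • v) with hF
  set F' : ℝ → EuclideanSpace ℝ (Fin n) → ℝ := fun t x => fderiv ℝ h (x + t • v) v with hF'
  set bound : EuclideanSpace ℝ (Fin n) → ℝ :=
    (closedBall (0 : EuclideanSpace ℝ (Fin n)) (R + ‖v‖)).indicator (fun _ => C * ‖v‖) with hbd
  have key : HasDerivAt (fun t => ∫ x, F t x) (∫ x, F' 0 x) 0 := by
    refine (hasDerivAt_integral_of_dominated_loc_of_deriv_le (bound := bound) (Metric.ball_mem_nhds (0:ℝ) one_pos) ?_ ?_ ?_ ?_ ?_ ?_).2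
    · filter_upwards with t
      exact (hh.continuous.comp (continuous_id.add continuous_const)).aestronglyMeasurable
    · exact ((hh.continuous.integrable_of_hasCompactSupport hc).comp_add_right _)
    · exact (((hh.continuous_fderiv one_ne_zero).comp
        (continuous_id.add continuous_const)).clm_apply continuous_const).aestronglyMeasurable
    · filter_upwards with x t ht
      by_cases hx : x ∈ closedBall (0 : EuclideanSpace ℝ (Fin n)) (R + ‖v‖)
      · have : ‖F' t x‖ ≤ C * ‖v‖ := by
          refine le_trans ((fderiv ℝ h (x + t • v)).le_opNorm v) ?_
          exact mul_le_mul_of_nonneg_right (hC _) (norm_nonneg _)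
        simpa [hbd, indicator_of_mem hx] using this
      · have hxs : x + t • v ∉ tsupport h := by
          intro hmem
          apply hx
          have := hR hmem
          simp only [mem_closedBall, dist_zero_right] at this ⊢
          have h1 : ‖x‖ ≤ ‖x + t • v‖ + ‖t • v‖ := by
            calc ‖x‖ = ‖x + t • v - t • v‖ := by rw [add_sub_cancel_right]
            _ ≤ ‖x + t • v‖ + ‖t • v‖ := norm_sub_le _ _
          have h2 : ‖t • v‖ ≤ ‖v‖ := by
            rw [norm_smul]
            simp only [mem_ball, dist_zero_right] at ht
            have : ‖t‖ ≤ 1 := le_of_lt (by simpa using ht)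
            nlinarith [norm_nonneg v, norm_nonneg t]
          linarith
        have : fderiv ℝ h (x + t • v) = 0 := by
          by_contra hne
          exact hxs (support_fderiv_subset ℝ (Function.mem_support.2 hne))
        simp [hF', this, hbd, indicator_of_notMem hx]
    · exact (integrable_indicator_iff measurableSet_closedBall).2
        (integrableOn_const measure_closedBall_lt_top.ne)
    · filter_upwards with x t _
      have hd : HasDerivAt (fun s : ℝ => x + s • v) v t := by
        simpa using ((hasDerivAt_id t).smul_const v).const_add x
      exact (hh.differentiable one_ne_zero _).hasFDerivAt.comp_hasDerivAt t hd
  have hconst : (fun t : ℝ => ∫ x, F t x) = fun _ => ∫ x, h x := by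
    funext t
    exact integral_add_right_eq_self _ _
  have : ∫ x, F' 0 x = 0 := by
    have h0 : HasDerivAt (fun _ : ℝ => ∫ x, h x) (∫ x, F' 0 x) 0 := hconst ▸ key
    simpa using h0.unique (hasDerivAt_const _ _)
  simpa [hF'] using this


lemma polar_integral {n : ℕ} (hn : 0 < n) (k : Esp n → ℝ)
    (u : Metric.sphere (0 : Esp n) 1 → ℝ) (v : ℝ → ℝ)
    (hk : ∀ r : ℝ, 0 < r → ∀ ω : Metric.sphere (0 : Esp n) 1,
      k (r • (ω : Esp n)) = u ω * v r) :
    ∫ x, k x = (∫ ω, u ω ∂(volume : Measure (Esp n)).toSphere)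
      * ∫ r in Ioi (0 : ℝ), (r ^ (n - 1) : ℝ) • v r := by
  have hnt : Nontrivial (Esp n) := by
    have : Nonempty (Fin n) := ⟨⟨0, hn⟩⟩
    infer_instance
  have hdim : Module.finrank ℝ (Esp n) = n := finrank_euclideanSpace_fin
  set μ := (volume : Measure (Esp n)) with hμ
  calc
    ∫ x, k x ∂μ = ∫ x : ({0}ᶜ : Set (Esp n)), k x ∂(μ.comap (↑)) := by
      rw [integral_subtype_comap (measurableSet_singleton _).compl fun x ↦ k x,
        MeasureTheory.restrict_compl_singleton]
    _ = ∫ x : ({0}ᶜ : Set (Esp n)),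
        (fun p : Metric.sphere (0 : Esp n) 1 × Ioi (0:ℝ) => u p.1 * v p.2)
          (homeomorphUnitSphereProd (Esp n) x) ∂(μ.comap (↑)) := by
      refine integral_congr_ae (Filter.Eventually.of_forall fun x => ?_)
      have hx : (x : Esp n) ≠ 0 := x.2
      have hxn : (0:ℝ) < ‖(x : Esp n)‖ := norm_pos_iff.2 hx
      have := hk ‖(x : Esp n)‖ hxn ⟨‖(x : Esp n)‖⁻¹ • (x : Esp n), by
        rw [mem_sphere_zero_iff_norm, norm_smul, norm_inv, norm_norm,
          inv_mul_cancel₀ hxn.ne']⟩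
      rw [smul_inv_smul₀ hxn.ne'] at this
      simpa [homeomorphUnitSphereProd, homeomorphSphereProd] using this
    _ = ∫ p : Metric.sphere (0 : Esp n) 1 × Ioi (0:ℝ), u p.1 * v p.2
        ∂(μ.toSphere.prod (volumeIoiPow (Module.finrank ℝ (Esp n) - 1))) :=
      by simpa using (μ.measurePreserving_homeomorphUnitSphereProd.integral_comp
        (Homeomorph.measurableEmbedding _)
        (fun p : Metric.sphere (0 : Esp n) 1 × Ioi (0:ℝ) => u p.1 * v p.2))
    _ = (∫ ω, u ω ∂μ.toSphere) * ∫ r : Ioi (0:ℝ), v r ∂(volumeIoiPow (n - 1)) := by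
      rw [hdim]; exact integral_prod_mul u (fun r : Ioi (0:ℝ) => v r)
    _ = (∫ ω, u ω ∂μ.toSphere) * ∫ r in Ioi (0:ℝ), (r ^ (n - 1) : ℝ) • v r := by
      congr 1
      simp only [Measure.volumeIoiPow, ENNReal.ofReal]
      rw [integral_withDensity_eq_integral_smul
        ((measurable_subtype_coe.pow_const _).real_toNNReal),
        integral_subtype_comap measurableSet_Ioi fun a ↦ Real.toNNReal (a ^ (n - 1)) • v a,
        setIntegral_congr_fun measurableSet_Ioi fun x hx ↦ ?_]
      rw [NNReal.smul_def, Real.coe_toNNReal _ (pow_nonneg hx.out.le _)]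


lemma fderiv_homog {n : ℕ} (f : Esp n → ℝ)
    (hf : ∀ ξ : Esp n, ξ ≠ 0 → ContDiffAt ℝ 1 f ξ)
    (hhom : ∀ t : ℝ, 0 < t → ∀ ξ : Esp n, ξ ≠ 0 → f (t • ξ) = t ^ ((1:ℝ) - n) * f ξ)
    {t : ℝ} (ht : 0 < t) {ξ : Esp n} (hξ : ξ ≠ 0) (v : Esp n) :
    fderiv ℝ f (t • ξ) v = (t ^ ((1:ℝ) - n) * t⁻¹) * fderiv ℝ f ξ v := by
  have hd1 : DifferentiableAt ℝ f (t • ξ) :=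
    ((hf _ (smul_ne_zero ht.ne' hξ)).differentiableAt one_ne_zero)
  have hd0 : DifferentiableAt ℝ f ξ := (hf ξ hξ).differentiableAt one_ne_zero
  have hL : HasFDerivAt (fun x : Esp n => t • x)
      (t • ContinuousLinearMap.id ℝ (Esp n)) ξ := by
    exact (hasFDerivAt_id ξ).const_smul t
  have h1 : HasFDerivAt (fun x => f (t • x))
      ((fderiv ℝ f (t • ξ)).comp (t • ContinuousLinearMap.id ℝ (Esp n))) ξ :=
    hd1.hasFDerivAt.comp ξ hL
  have heq : (fun x => f (t • x)) =ᶠ[nhds ξ] fun x => t ^ ((1:ℝ) - n) * f x := by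
    filter_upwards [isOpen_compl_singleton.mem_nhds (by simpa using hξ)] with x hx
    exact hhom t ht x hx
  have h2 : HasFDerivAt (fun x => t ^ ((1:ℝ) - n) * f x)
      ((t ^ ((1:ℝ) - n)) • fderiv ℝ f ξ) ξ := hd0.hasFDerivAt.const_mul _
  have key := (h1.congr_of_eventuallyEq heq.symm).unique h2
  have hv := ContinuousLinearMap.ext_iff.1 key v
  simp only [ContinuousLinearMap.coe_comp', Function.comp_apply,
    ContinuousLinearMap.smul_apply, ContinuousLinearMap.coe_smul',
    ContinuousLinearMap.coe_id', Pi.smul_apply, id_eq, smul_eq_mul,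
    _root_.map_smul] at hv
  field_simp at hv ⊢
  linarith [hv]


noncomputable def bump : ContDiffBump (5/2 : ℝ) :=
  { rIn := 1, rOut := 3/2, rIn_pos := one_pos, rIn_lt_rOut := by norm_num }

lemma bump_zero_le {s : ℝ} (hs : s ≤ 1) : bump s = 0 := by
  apply bump.zero_of_le_dist
  rw [Real.dist_eq, abs_of_nonpos (by norm_num [bump] at *; linarith)]
  norm_num [bump]; linarith

lemma bump_zero_ge {s : ℝ} (hs : 4 ≤ s) : bump s = 0 := by
  apply bump.zero_of_le_dist
  rw [Real.dist_eq, abs_of_nonneg (by norm_num [bump] at *; linarith)]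
  norm_num [bump]; linarith

lemma deriv_bump_zero_lt {s : ℝ} (hs : s < 1) : deriv bump s = 0 := by
  have h : (⇑bump : ℝ → ℝ) =ᶠ[nhds s] fun _ => 0 := by
    filter_upwards [Iio_mem_nhds hs] with y hy
    exact bump_zero_le (le_of_lt hy)
  rw [h.deriv_eq, deriv_const]

lemma deriv_bump_zero_gt {s : ℝ} (hs : 4 < s) : deriv bump s = 0 := by
  have h : (⇑bump : ℝ → ℝ) =ᶠ[nhds s] fun _ => 0 := by
    filter_upwards [Ioi_mem_nhds hs] with y hy
    exact bump_zero_ge (le_of_lt hy)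
  rw [h.deriv_eq, deriv_const]

lemma bump_diff : Differentiable ℝ (⇑bump : ℝ → ℝ) :=
  (bump.contDiff (n := 1)).differentiable (by simp)

lemma deriv_bump_cont : Continuous (deriv (⇑bump : ℝ → ℝ)) :=
  (bump.contDiff (n := 2)).continuous_deriv one_le_two

/-- ∫_{Ioi 0} 2 r φ'(r²) dr = 0. -/
lemma integral_deriv_bump_sq : ∫ r in Ioi (0:ℝ), deriv bump (r^2) * (2*r) = 0 := by
  have hψ : ∀ r : ℝ, HasDerivAt (fun s : ℝ => bump (s^2)) (deriv bump (r^2) * (2*r)) r := by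
    intro r
    have h1 : HasDerivAt (fun s : ℝ => s^2) (2*r) r := by simpa using hasDerivAt_pow 2 r
    exact HasDerivAt.comp (h₂ := (⇑bump : ℝ → ℝ)) (h := fun s : ℝ => s^2) r ((bump_diff (r^2)).hasDerivAt) h1
  have hC1 : ContDiff ℝ 1 (fun s : ℝ => bump (s^2)) :=
    bump.contDiff.comp (contDiff_id.pow 2)
  have hCS : HasCompactSupport (fun s : ℝ => bump (s^2)) := by
    refine HasCompactSupport.intro (isCompact_Icc (a := (-2:ℝ)) (b := 2)) ?_
    intro s hs
    simp only [mem_Icc, not_and_or, not_le] at hs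
    refine bump_zero_ge ?_
    rcases hs with h | h <;> nlinarith
  have := hCS.integral_Ioi_deriv_eq hC1 0
  have heq : ∀ r ∈ Ioi (0:ℝ), deriv (fun s : ℝ => bump (s^2)) r = deriv bump (r^2) * (2*r) :=
    fun r _ => (hψ r).deriv
  rw [setIntegral_congr_fun measurableSet_Ioi (fun r hr => (heq r hr).symm), this]
  simpa using bump_zero_le (by norm_num : (0:ℝ)^2 ≤ 1)


lemma rpow_cancel {n : ℕ} (hn : 1 ≤ n) {r : ℝ} (hr : 0 < r) :
    (r : ℝ) ^ (n - 1 : ℕ) * r ^ ((1:ℝ) - n) = 1 := by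
  rw [← Real.rpow_natCast r (n-1), ← Real.rpow_add hr]
  rw [Nat.cast_sub hn]
  norm_num

lemma c1_pos {n : ℕ} (hn : 1 ≤ n) :
    0 < ∫ r in Ioi (0:ℝ), (r ^ (n - 1 : ℕ) : ℝ) • (bump (r^2) * (r ^ ((1:ℝ) - n) * r⁻¹)) := by
  set W : ℝ → ℝ := fun r => (r ^ (n - 1 : ℕ) : ℝ) • (bump (r^2) * (r ^ ((1:ℝ) - n) * r⁻¹))
    with hW
  have hWnn : ∀ r ∈ Ioi (0:ℝ), 0 ≤ W r := by
    intro r hr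
    have hr0 : (0:ℝ) < r := hr
    have := bump.nonneg (x := r^2)
    have h1 : (0:ℝ) ≤ r ^ ((1:ℝ) - n) := (Real.rpow_pos_of_pos hr0 _).le
    simp only [hW, smul_eq_mul]
    positivity
  have hWz : ∀ r ∈ Ioi (0:ℝ) \ Icc (1:ℝ) 2, W r = 0 := by
    rintro r ⟨hr, hr2⟩
    simp only [mem_Icc, not_and_or, not_le] at hr2
    have : bump (r^2) = 0 := by
      rcases hr2 with h | h
      · exact bump_zero_le (by nlinarith [mem_Ioi.1 hr])
      · exact bump_zero_ge (by nlinarith)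
    simp [hW, this]
  have hint : IntegrableOn W (Ioi (0:ℝ)) := by
    have h1 : IntegrableOn W (Icc (1:ℝ) 2) := by
      refine ContinuousOn.integrableOn_compact isCompact_Icc ?_
      have hc1 : ContinuousOn (fun r : ℝ => (r ^ (n - 1 : ℕ) : ℝ)) (Icc 1 2) :=
        (continuous_pow _).continuousOn
      have hc2 : ContinuousOn (fun r : ℝ => bump (r^2)) (Icc 1 2) :=
        (bump.continuous.comp (continuous_pow 2)).continuousOn
      have hc3 : ContinuousOn (fun r : ℝ => r ^ ((1:ℝ) - n)) (Icc 1 2) := by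
        intro r hr
        have : r ≠ 0 := by have := hr.1; intro h; rw [h] at this; linarith
        exact (Real.continuousAt_rpow_const r _ (Or.inl this)).continuousWithinAt
      have hc4 : ContinuousOn (fun r : ℝ => r⁻¹) (Icc (1:ℝ) 2) := by
        apply ContinuousOn.inv₀ continuousOn_id
        intro r hr
        have h1 := hr.1
        simp only [id_eq]
        intro h; rw [h] at h1; linarith
      exact (hc1.smul (hc2.mul (hc3.mul hc4)))
    have h2 : IntegrableOn W (Ioi (0:ℝ) ∩ Icc 1 2) := h1.mono_set inter_subset_right
    have h3 : IntegrableOn W (Ioi (0:ℝ) \ Icc 1 2) := by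
      refine (integrableOn_zero (μ := volume)).congr_fun (fun r hr => (hWz r hr).symm)
        (measurableSet_Ioi.diff measurableSet_Icc)
    have := h2.union h3
    rwa [Set.inter_union_diff] at this
  rw [setIntegral_pos_iff_support_of_nonneg_ae ?_ hint]
  · refine lt_of_lt_of_le ?_ (measure_mono (?_ : Ioo (13/10 : ℝ) (18/10) ⊆ _))
    · rw [Real.volume_Ioo]
      norm_num
    · intro r hr
      obtain ⟨h1, h2⟩ := hr
      have hr0 : (0:ℝ) < r := by linarith
      have hbpos : 0 < bump (r^2) := by
        apply bump.pos_of_mem_ball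
        rw [mem_ball_iff_norm, Real.norm_eq_abs, abs_lt]
        constructor <;> [skip; skip] <;> norm_num [bump] <;> nlinarith
      have : 0 < W r := by
        simp only [hW, smul_eq_mul]
        have h3 : (0:ℝ) < r ^ ((1:ℝ) - n) := Real.rpow_pos_of_pos hr0 _
        positivity
      exact ⟨ne_of_gt this, mem_Ioi.2 hr0⟩
  · filter_upwards [ae_restrict_mem measurableSet_Ioi] with r hr
    exact hWnn r hr

end AuxLemmas

open Set Metric

/-- If `n ≥ 2` and `g_1, …, g_n : ℝⁿ \ {0} → ℝ` are `C¹` functions, each positively homogeneous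
of degree `1 − n`, then the integral over the unit sphere of `a(ξ) = Σ_j ∂g_j/∂ξ_j (ξ)`
with respect to the surface measure vanishes. -/
theorem sphere_integral_of_sum_of_derivatives_eq_zero (n : ℕ) (hn : 2 ≤ n)
    (g : Fin n → EuclideanSpace ℝ (Fin n) → ℝ)
    (hg : ∀ j : Fin n, ∀ ξ : EuclideanSpace ℝ (Fin n), ξ ≠ 0 → ContDiffAt ℝ 1 (g j) ξ)
    (hhom : ∀ j : Fin n, ∀ t : ℝ, 0 < t → ∀ ξ : EuclideanSpace ℝ (Fin n), ξ ≠ 0 →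
      g j (t • ξ) = t ^ ((1 : ℝ) - n) * g j ξ) :
    ∫ ξ : Metric.sphere (0 : EuclideanSpace ℝ (Fin n)) 1,
      (∑ j : Fin n, fderiv ℝ (g j) (ξ : EuclideanSpace ℝ (Fin n)) (EuclideanSpace.single j 1))
      ∂((volume : Measure (EuclideanSpace ℝ (Fin n))).toSphere) = 0 := by
  classical
  have hn1 : 1 ≤ n := by omega
  set e : Fin n → Esp n := fun j => EuclideanSpace.single j 1 with he
  set w : Esp n → ℝ := fun x => bump (‖x‖^2) with hw
  set F : Fin n → Esp n → ℝ := fun j x => w x * g j x with hF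
  set a : Esp n → ℝ := fun x => ∑ j, fderiv ℝ (g j) x (e j) with ha
  set Q : Esp n → ℝ := fun x => (2 * deriv (⇑bump) (‖x‖^2)) * ∑ j, x j * g j x with hQdef
  set D : Esp n → ℝ := fun x => ∑ j, fderiv ℝ (F j) x (e j) with hD
  -- smoothness of w
  have hwC1 : ContDiff ℝ 1 w := bump.contDiff.comp (contDiff_norm_sq (𝕜 := ℝ))
  -- w vanishes near 0 and far away
  have hwz : ∀ x : Esp n, ‖x‖ < 1 → w x = 0 := fun x hx =>
    bump_zero_le (by nlinarith [norm_nonneg x])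
  have hwz2 : ∀ x : Esp n, 2 < ‖x‖ → w x = 0 := fun x hx =>
    bump_zero_ge (by nlinarith)
  -- F j is C¹
  have hFC1 : ∀ j, ContDiff ℝ 1 (F j) := by
    intro j
    rw [contDiff_iff_contDiffAt]
    intro x
    by_cases hx : x = 0
    · subst hx
      have hev : F j =ᶠ[nhds (0 : Esp n)] fun _ => 0 := by
        filter_upwards [Metric.ball_mem_nhds (0 : Esp n) one_pos] with y hy
        simp only [hF]
        rw [hwz y (by simpa using hy)]
        ring
      exact (contDiffAt_const (c := (0:ℝ))).congr_of_eventuallyEq hev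
    · exact (hwC1.contDiffAt).mul (hg j x hx)
  have hFsupp : ∀ j, tsupport (F j) ⊆ closedBall (0 : Esp n) 2 := by
    intro j
    apply closure_minimal _ Metric.isClosed_closedBall
    intro x hx
    simp only [Function.mem_support, hF] at hx
    by_contra hmem
    simp only [mem_closedBall, dist_zero_right, not_le] at hmem
    exact hx (by rw [hwz2 x hmem]; ring)
  have hFcs : ∀ j, HasCompactSupport (F j) := fun j =>
    HasCompactSupport.of_support_subset_isCompact (isCompact_closedBall _ _)
      ((subset_closure).trans (hFsupp j))
  -- product rule
  have hfd : ∀ x : Esp n, x ≠ 0 → ∀ j, fderiv ℝ (F j) x (e j) =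
      w x * fderiv ℝ (g j) x (e j) + g j x * (deriv (⇑bump) (‖x‖^2) * (2 * x j)) := by
    intro x hx j
    have hw' : HasFDerivAt w
        ((deriv (⇑bump) (‖x‖^2)) • (2 • (innerSL ℝ x))) x :=
      HasDerivAt.comp_hasFDerivAt (h₂ := (⇑bump : ℝ → ℝ)) (f := fun y : Esp n => ‖y‖^2) x (bump_diff (‖x‖^2)).hasDerivAt (hasStrictFDerivAt_norm_sq x).hasFDerivAt
    have hgx : HasFDerivAt (g j) (fderiv ℝ (g j) x) x :=
      ((hg j x hx).differentiableAt one_ne_zero).hasFDerivAt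
    have hprod := (hw'.mul hgx).fderiv
    have hpr2 : fderiv ℝ (F j) x = w x • fderiv ℝ (g j) x
        + g j x • (deriv (⇑bump) (‖x‖^2) • 2 • (innerSL ℝ) x) := hprod
    rw [hpr2]
    simp only [ContinuousLinearMap.add_apply, ContinuousLinearMap.smul_apply, smul_eq_mul,
      ContinuousLinearMap.coe_smul', Pi.smul_apply, innerSL_apply_apply]
    rw [real_inner_comm]
    rw [EuclideanSpace.inner_single_left]
    simp only [map_one, one_mul]
    ring
  -- D = w * a + Q off the origin
  have hDPQ : ∀ x : Esp n, x ≠ 0 → D x = w x * a x + Q x := by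
    intro x hx
    simp only [hD, ha, hQdef]
    rw [Finset.sum_congr rfl (fun j _ => hfd x hx j), Finset.sum_add_distrib,
      ← Finset.mul_sum, Finset.mul_sum, ← Finset.sum_add_distrib]
    rw [Finset.mul_sum, ← Finset.sum_add_distrib]
    refine Finset.sum_congr rfl fun j _ => by ring
  -- integrability of the divergence terms
  have hDj_cont : ∀ j, Continuous fun x : Esp n => fderiv ℝ (F j) x (e j) := fun j =>
    ((hFC1 j).continuous_fderiv one_ne_zero).clm_apply continuous_const
  have hDj_cs : ∀ j, HasCompactSupport fun x : Esp n => fderiv ℝ (F j) x (e j) := by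
    intro j
    refine HasCompactSupport.intro (isCompact_closedBall (0 : Esp n) 2) ?_
    intro x hx
    have hxt : x ∉ tsupport (F j) := fun hmem => hx (hFsupp j hmem)
    have : fderiv ℝ (F j) x = 0 := by
      by_contra hne
      exact hxt (support_fderiv_subset ℝ (Function.mem_support.2 hne))
    simp [this]
  have hDj_int : ∀ j, Integrable fun x : Esp n => fderiv ℝ (F j) x (e j) := fun j =>
    (hDj_cont j).integrable_of_hasCompactSupport (hDj_cs j)
  have hDint : Integrable D := by
    simpa [hD] using integrable_finset_sum Finset.univ (fun j _ => hDj_int j)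
  have hD0 : ∫ x, D x = 0 := by
    simp only [hD]
    rw [integral_finset_sum Finset.univ (fun j _ => hDj_int j)]
    exact Finset.sum_eq_zero fun j _ =>
      integral_fderiv_apply_eq_zero (F j) (hFC1 j) (hFcs j) (e j)
  -- continuity and integrability of Q
  have hQcont : Continuous Q := by
    rw [continuous_iff_continuousAt]
    intro x
    by_cases hx : x = 0
    · subst hx
      have hev : Q =ᶠ[nhds (0 : Esp n)] fun _ => 0 := by
        filter_upwards [Metric.ball_mem_nhds (0 : Esp n) one_pos] with y hy
        have : deriv (⇑bump) (‖y‖^2) = 0 :=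
          deriv_bump_zero_lt (by nlinarith [norm_nonneg y, mem_ball_zero_iff.1 hy])
        simp [hQdef, this]
      exact (continuousAt_const (y := (0:ℝ))).congr hev.symm
    · refine ContinuousAt.mul ?_ ?_
      · exact (continuous_const.mul (deriv_bump_cont.comp ((continuous_norm).pow 2))).continuousAt
      · exact tendsto_finset_sum _ fun j _ =>
          ((PiLp.continuous_apply 2 _ j).continuousAt.mul (hg j x hx).continuousAt)
  have hQcs : HasCompactSupport Q := by
    refine HasCompactSupport.intro (isCompact_closedBall (0 : Esp n) 2) ?_
    intro x hx
    simp only [mem_closedBall, dist_zero_right, not_le] at hx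
    have : deriv (⇑bump) (‖x‖^2) = 0 := deriv_bump_zero_gt (by nlinarith)
    simp [hQdef, this]
  have hQint : Integrable Q := hQcont.integrable_of_hasCompactSupport hQcs
  -- polar coordinates
  set u1 : Metric.sphere (0 : Esp n) 1 → ℝ :=
    fun ω => ∑ j, fderiv ℝ (g j) (ω : Esp n) (e j) with hu1
  set v1 : ℝ → ℝ := fun r => bump (r^2) * (r ^ ((1:ℝ) - n) * r⁻¹) with hv1
  set u2 : Metric.sphere (0 : Esp n) 1 → ℝ :=
    fun ω => ∑ j, (ω : Esp n) j * g j (ω : Esp n) with hu2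
  set v2 : ℝ → ℝ := fun r => (2 * deriv (⇑bump) (r^2)) * (r * r ^ ((1:ℝ) - n)) with hv2
  have hnormsq : ∀ (r : ℝ), 0 < r → ∀ ω : Metric.sphere (0 : Esp n) 1,
      ‖r • (ω : Esp n)‖^2 = r^2 := by
    intro r hr ω
    rw [norm_smul, mem_sphere_zero_iff_norm.1 ω.2]
    rw [Real.norm_eq_abs, abs_of_pos hr]
    ring
  have hk1 : ∀ r : ℝ, 0 < r → ∀ ω : Metric.sphere (0 : Esp n) 1,
      (D (r • (ω : Esp n)) - Q (r • (ω : Esp n))) = u1 ω * v1 r := by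
    intro r hr ω
    have hω : (ω : Esp n) ≠ 0 := ne_of_mem_sphere ω.2 one_ne_zero
    have hx : r • (ω : Esp n) ≠ 0 := smul_ne_zero hr.ne' hω
    have h1 := hDPQ _ hx
    have h2 : w (r • (ω : Esp n)) = bump (r^2) := by
      simp only [hw]; rw [hnormsq r hr ω]
    have h3 : a (r • (ω : Esp n)) = (r ^ ((1:ℝ) - n) * r⁻¹) * u1 ω := by
      simp only [ha, hu1]
      rw [Finset.mul_sum]
      exact Finset.sum_congr rfl fun j _ =>
        fderiv_homog (g j) (hg j) (hhom j) hr hω (e j)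
    rw [h1, h2, h3]
    simp only [hv1]
    ring
  have hk2 : ∀ r : ℝ, 0 < r → ∀ ω : Metric.sphere (0 : Esp n) 1,
      Q (r • (ω : Esp n)) = u2 ω * v2 r := by
    intro r hr ω
    have hω : (ω : Esp n) ≠ 0 := ne_of_mem_sphere ω.2 one_ne_zero
    simp only [hQdef, hu2, hv2]
    rw [hnormsq r hr ω]
    have hterm : ∀ j : Fin n, (r • (ω : Esp n)) j * g j (r • (ω : Esp n)) =
        (r * r ^ ((1:ℝ) - n)) * ((ω : Esp n) j * g j (ω : Esp n)) := by
      intro j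
      rw [hhom j r hr _ hω]
      have : (r • (ω : Esp n)) j = r * (ω : Esp n) j := rfl
      rw [this]
      ring
    rw [Finset.sum_congr rfl fun j _ => hterm j, ← Finset.mul_sum]
    ring
  have hPpolar := polar_integral (n := n) (by omega) (fun x => D x - Q x) u1 v1 hk1
  have hQpolar := polar_integral (n := n) (by omega) Q u2 v2 hk2
  have hzero2 : ∫ r in Ioi (0:ℝ), (r ^ (n - 1 : ℕ) : ℝ) • v2 r = 0 := by
    rw [setIntegral_congr_fun measurableSet_Ioi
      (g := fun r : ℝ => deriv (⇑bump) (r^2) * (2*r)) ?_]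
    · exact integral_deriv_bump_sq
    · intro r hr
      have h := rpow_cancel hn1 (mem_Ioi.1 hr)
      simp only [hv2, smul_eq_mul]
      linear_combination (2 * deriv (⇑bump) (r^2) * r) * h
  have hPint : Integrable (fun x : Esp n => D x - Q x) := hDint.sub hQint
  have hsplit : ∫ x, (D x - Q x) = (∫ x, D x) - ∫ x, Q x := integral_sub hDint hQint
  have hIc1 : (∫ ω, u1 ω ∂(volume : Measure (Esp n)).toSphere)
      * (∫ r in Ioi (0:ℝ), (r ^ (n - 1 : ℕ) : ℝ) • v1 r) = 0 := by
    rw [← hPpolar, hsplit, hD0, hQpolar, hzero2]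
    ring
  have hc1 := c1_pos hn1
  have hc1' : (∫ r in Ioi (0:ℝ), (r ^ (n - 1 : ℕ) : ℝ) • v1 r) ≠ 0 := by
    simp only [hv1]
    exact ne_of_gt hc1
  have := (mul_eq_zero.1 hIc1).resolve_right hc1'
  exact this
end

section
/- Let X be a compact Hausdorff topological space. The extreme points of the set of states on C(X, ℂ) are exactly the point evaluations: a state φ is an extreme point of the state space if and only if there exists x ∈ X with φ(f) = f(x) for all f ∈ C(X, ℂ). -/
open scoped ComplexOrder

/-- A state on `C(X, ℂ)`: a continuous linear functional which is positive
(`0 ≤ φ f` whenever `0 ≤ f` pointwise) and unital (`φ 1 = 1`). -/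
def IsStateOnContinuousFunctions {X : Type*} [TopologicalSpace X] [CompactSpace X]
    (φ : C(X, ℂ) →L[ℂ] ℂ) : Prop :=
  φ 1 = 1 ∧ ∀ f : C(X, ℂ), (∀ x : X, 0 ≤ f x) → 0 ≤ φ f

namespace StateAux

set_option linter.unusedSectionVars false

variable {X : Type*} [TopologicalSpace X] [CompactSpace X]

/-- Embedding of real continuous functions into complex ones. -/
noncomputable def oR (g : C(X, ℝ)) : C(X, ℂ) :=
  ⟨fun x => (g x : ℂ), Complex.continuous_ofReal.comp g.continuous⟩

@[simp] lemma oR_apply (g : C(X, ℝ)) (x : X) : oR g x = (g x : ℂ) := rfl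

lemma oR_one : oR (1 : C(X, ℝ)) = 1 := by ext x; simp

lemma star_oR (g : C(X, ℝ)) : star (oR g) = oR g := by
  ext x; simp [Complex.conj_ofReal]

/-- real part as a continuous function -/
noncomputable def reC (f : C(X, ℂ)) : C(X, ℝ) :=
  ⟨fun x => (f x).re, Complex.continuous_re.comp f.continuous⟩

noncomputable def imC (f : C(X, ℂ)) : C(X, ℝ) :=
  ⟨fun x => (f x).im, Complex.continuous_im.comp f.continuous⟩

lemma decomp (f : C(X, ℂ)) : f = oR (reC f) + Complex.I • oR (imC f) := by
  ext x
  simp [reC, imC, Complex.ext_iff]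

variable {ψ : C(X, ℂ) →L[ℂ] ℂ}

lemma pos_oR (hψ : IsStateOnContinuousFunctions ψ) (g : C(X, ℝ)) (hg : ∀ x, 0 ≤ g x) :
    0 ≤ ψ (oR g) :=
  hψ.2 _ fun x => by simpa using Complex.zero_le_real.2 (hg x)

lemma im_oR (hψ : IsStateOnContinuousFunctions ψ) (g : C(X, ℝ)) : (ψ (oR g)).im = 0 := by
  have h : oR g = oR (g ⊔ 0) - oR (-g ⊔ 0) := by
    ext x
    simp only [oR_apply, ContinuousMap.sub_apply, ContinuousMap.sup_apply,
      ContinuousMap.neg_apply, ContinuousMap.zero_apply]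
    rw [← Complex.ofReal_sub, Complex.ofReal_inj]
    exact (max_zero_sub_eq_self (g x)).symm
  have h1 : 0 ≤ ψ (oR (g ⊔ 0)) := pos_oR hψ _ fun x => by simp
  have h2 : 0 ≤ ψ (oR (-g ⊔ 0)) := pos_oR hψ _ fun x => by simp
  rw [h, map_sub]
  have e1 := (Complex.le_def.mp h1).2
  have e2 := (Complex.le_def.mp h2).2
  simp [Complex.sub_im, ← e1, ← e2]

lemma re_eq (hψ : IsStateOnContinuousFunctions ψ) (g : C(X, ℝ)) :
    ψ (oR g) = ((ψ (oR g)).re : ℂ) := by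
  rw [Complex.ext_iff]
  simp [im_oR hψ]

lemma star_state (hψ : IsStateOnContinuousFunctions ψ) (f : C(X, ℂ)) :
    ψ (star f) = starRingEnd ℂ (ψ f) := by
  set a := ψ (oR (reC f)) with ha
  set b := ψ (oR (imC f)) with hb
  have hval : ψ f = a + Complex.I * b := by
    conv_lhs => rw [decomp f]
    rw [map_add, map_smul]
    simp [smul_eq_mul]
    rfl
  have hs : star f = oR (reC f) - Complex.I • oR (imC f) := by
    ext x
    simp [reC, imC, Complex.ext_iff]
  have hvs : ψ (star f) = a - Complex.I * b := by
    rw [hs, map_sub, map_smul]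
    simp [smul_eq_mul]
    rfl
  have e1 := im_oR hψ (reC f)
  have e2 := im_oR hψ (imC f)
  rw [hvs, hval, Complex.ext_iff]
  rw [← ha] at e1
  rw [← hb] at e2
  constructor <;>
    simp [Complex.sub_im, Complex.sub_re, Complex.add_im, Complex.add_re, e1, e2,
      Complex.mul_re, Complex.mul_im]

lemma sq_pos (hψ : IsStateOnContinuousFunctions ψ) (f : C(X, ℂ)) : 0 ≤ ψ (star f * f) :=
  hψ.2 _ fun x => by
    simp only [ContinuousMap.mul_apply, ContinuousMap.star_apply]
    exact star_mul_self_nonneg _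

lemma cauchy_schwarz (hψ : IsStateOnContinuousFunctions ψ) (u v : C(X, ℂ)) :
    Complex.normSq (ψ (star u * v)) ≤ (ψ (star u * u)).re * (ψ (star v * v)).re := by
  set z := ψ (star u * v) with hz
  by_cases h0 : z = 0
  · rw [h0]
    simp only [map_zero]
    have h1 := (Complex.le_def.mp (sq_pos hψ u)).1
    have h2 := (Complex.le_def.mp (sq_pos hψ v)).1
    simp only [Complex.zero_re] at h1 h2
    positivity
  · set A := ψ (star u * u) with hA
    set B := ψ (star v * v) with hB
    have hA0 := Complex.le_def.mp (sq_pos hψ u)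
    have hB0 := Complex.le_def.mp (sq_pos hψ v)
    rw [← hA] at hA0
    rw [← hB] at hB0
    have hBre : B = (B.re : ℂ) := by
      rw [Complex.ext_iff]
      refine ⟨by simp, by simp [← hB0.2]⟩
    have hvu : ψ (star v * u) = starRingEnd ℂ z := by
      rw [hz, ← star_state hψ]
      congr 1
      rw [star_mul, star_star]
    have key : ∀ t : ℝ, 0 ≤ Complex.normSq z * B.re * (t * t) + 2 * Complex.normSq z * t + A.re := by
      intro t
      set c : ℂ := (t : ℂ) * starRingEnd ℂ z with hc
      set w := u + c • v with hw
      have hstar : star w * w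
          = star u * u + c • (star u * v) + (starRingEnd ℂ c) • (star v * u)
            + (starRingEnd ℂ c * c) • (star v * v) := by
        ext x
        simp only [hw, ContinuousMap.mul_apply, ContinuousMap.star_apply,
          ContinuousMap.add_apply, ContinuousMap.smul_apply, smul_eq_mul, Complex.star_def,
          map_add, map_mul]
        ring
      have hexp : ψ (star w * w)
          = A + c * z + starRingEnd ℂ c * starRingEnd ℂ z + starRingEnd ℂ c * c * B := by
        rw [hstar]
        simp only [map_add, map_smul, smul_eq_mul]
        rw [hvu, ← hz, ← hA, ← hB]
        try ring
      have hzz : z * starRingEnd ℂ z = (Complex.normSq z : ℂ) := Complex.mul_conj z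
      have hval : ψ (star w * w)
          = A + ((2 * t * Complex.normSq z : ℝ) : ℂ) + ((t * t * Complex.normSq z * B.re : ℝ) : ℂ) := by
        rw [hexp, hc, map_mul, Complex.conj_conj, Complex.conj_ofReal]
        nth_rewrite 1 [hBre]
        push_cast
        linear_combination (2 * (t : ℂ) + (t : ℂ) * (t : ℂ) * (B.re : ℂ)) * hzz
      have hre := (Complex.le_def.mp (sq_pos hψ w)).1
      rw [hval] at hre
      simp only [Complex.add_re, Complex.ofReal_re, Complex.zero_re] at hre
      linarith
    have hd := discrim_le_zero key
    rw [discrim] at hd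
    have hnz : 0 < Complex.normSq z := Complex.normSq_pos.mpr h0
    nlinarith [hnz]

lemma oR_mul (g h : C(X, ℝ)) : oR (g * h) = oR g * oR h := by
  ext x; push_cast [oR_apply, ContinuousMap.mul_apply]; rfl

lemma oR_sub (g h : C(X, ℝ)) : oR (g - h) = oR g - oR h := by
  ext x; push_cast [oR_apply, ContinuousMap.sub_apply]; rfl

lemma state_zero (hψ : IsStateOnContinuousFunctions ψ) (g : C(X, ℝ))
    (hg0 : ∀ x, 0 ≤ g x) (hg1 : ∀ x, g x ≤ 1) (hc : ψ (oR g) = 0) (f : C(X, ℂ)) :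
    ψ (oR g * f) = 0 := by
  have hcs := cauchy_schwarz hψ (oR g) f
  rw [star_oR] at hcs
  have h1 : oR g * oR g = oR (g * g) := (oR_mul g g).symm
  have h2 : 0 ≤ ψ (oR (g - g * g)) := pos_oR hψ _ fun x => by
    simp only [ContinuousMap.sub_apply, ContinuousMap.mul_apply]
    nlinarith [hg0 x, hg1 x]
  rw [oR_sub, map_sub, hc] at h2
  have h3 := (Complex.le_def.mp h2).1
  have h4 := (Complex.le_def.mp (pos_oR hψ (g * g) (fun x => by
    simpa [ContinuousMap.mul_apply] using mul_nonneg (hg0 x) (hg0 x)))).1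
  simp only [Complex.zero_re, Complex.sub_re, zero_sub, Complex.neg_re] at h3 h4
  rw [h1] at hcs
  have h5 : (ψ (oR (g * g))).re = 0 := by linarith
  rw [h5, zero_mul] at hcs
  have := Complex.normSq_nonneg (ψ (oR g * f))
  have h6 : Complex.normSq (ψ (oR g * f)) = 0 := le_antisymm hcs this
  exact Complex.normSq_eq_zero.mp h6

lemma mul01 (hψ : IsStateOnContinuousFunctions ψ)
    (hext : ψ ∈ Set.extremePoints ℝ {χ : C(X, ℂ) →L[ℂ] ℂ | IsStateOnContinuousFunctions χ})
    (g : C(X, ℝ)) (hg0 : ∀ x, 0 ≤ g x) (hg1 : ∀ x, g x ≤ 1) (f : C(X, ℂ)) :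
    ψ (oR g * f) = ψ (oR g) * ψ f := by
  set c : ℝ := (ψ (oR g)).re with hcdef
  have hgc : ψ (oR g) = (c : ℂ) := re_eq hψ g
  have hc0 : 0 ≤ c := by
    have := (Complex.le_def.mp (pos_oR hψ g hg0)).1
    simpa using this
  have h1mg : oR (1 - g) = 1 - oR g := by rw [oR_sub, oR_one]
  have hc1 : c ≤ 1 := by
    have := (Complex.le_def.mp (pos_oR hψ (1 - g) (fun x => by
      simpa [ContinuousMap.sub_apply] using hg1 x))).1
    rw [h1mg, map_sub, hψ.1] at this
    simp only [Complex.zero_re, Complex.sub_re, Complex.one_re] at this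
    linarith
  rcases eq_or_lt_of_le hc0 with h0 | h0
  · rw [hgc, ← h0]
    rw [state_zero hψ g hg0 hg1 (by rw [hgc, ← h0]; simp) f]
    simp
  rcases eq_or_lt_of_le hc1 with h1 | h1
  · have hz : ψ (oR (1 - g)) = 0 := by
      rw [h1mg, map_sub, hψ.1, hgc, h1]; simp
    have := state_zero hψ (1 - g) (fun x => by
        simp only [ContinuousMap.sub_apply, ContinuousMap.one_apply, sub_nonneg]
        exact hg1 x)
      (fun x => by
        simp only [ContinuousMap.sub_apply, ContinuousMap.one_apply]
        linarith [hg0 x]) hz f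
    rw [h1mg, sub_mul, one_mul, map_sub, sub_eq_zero] at this
    rw [← this, hgc, h1]
    simp
  -- main case : 0 < c < 1
  · have hcne : (c : ℂ) ≠ 0 := Complex.ofReal_ne_zero.mpr (ne_of_gt h0)
    have h1c : (0:ℝ) < 1 - c := by linarith
    have h1cne : ((1 - c : ℝ) : ℂ) ≠ 0 := Complex.ofReal_ne_zero.mpr (ne_of_gt h1c)
    set T : C(X, ℂ) →L[ℂ] ℂ := ψ.comp ((ContinuousLinearMap.mul ℂ C(X, ℂ)) (oR g)) with hT
    have hTapp : ∀ h : C(X, ℂ), T h = ψ (oR g * h) := fun h => rfl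
    set ψ₁ : C(X, ℂ) →L[ℂ] ℂ := (c⁻¹ : ℝ) • T with hψ₁
    set ψ₂ : C(X, ℂ) →L[ℂ] ℂ := ((1 - c)⁻¹ : ℝ) • (ψ - T) with hψ₂
    have hψ₁app : ∀ h : C(X, ℂ), ψ₁ h = ((c⁻¹ : ℝ) : ℂ) * ψ (oR g * h) := by
      intro h
      rw [hψ₁]
      simp [hTapp, Complex.real_smul]
    have hψ₂app : ∀ h : C(X, ℂ), ψ₂ h = (((1 - c)⁻¹ : ℝ) : ℂ) * (ψ h - ψ (oR g * h)) := by
      intro h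
      rw [hψ₂]
      simp [hTapp, Complex.real_smul]
    have hs₁ : IsStateOnContinuousFunctions ψ₁ := by
      constructor
      · rw [hψ₁app, mul_one, hgc, ← Complex.ofReal_mul, inv_mul_cancel₀ (ne_of_gt h0)]
        norm_num
      · intro h hh
        rw [hψ₁app]
        apply mul_nonneg
        · rw [Complex.zero_le_real]
          positivity
        · exact hψ.2 _ fun x => by
            simpa [ContinuousMap.mul_apply] using
              mul_nonneg (Complex.zero_le_real.2 (hg0 x)) (hh x)
    have hs₂ : IsStateOnContinuousFunctions ψ₂ := by
      constructor
      · rw [hψ₂app, mul_one, hψ.1, hgc, ← Complex.ofReal_one, ← Complex.ofReal_sub,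
          ← Complex.ofReal_mul, inv_mul_cancel₀ (ne_of_gt h1c)]
        try norm_num
      · intro h hh
        rw [hψ₂app]
        apply mul_nonneg
        · rw [Complex.zero_le_real]
          positivity
        · have heq2 : ψ h - ψ (oR g * h) = ψ ((1 - oR g) * h) := by
            rw [sub_mul, one_mul, map_sub]
          rw [heq2]
          refine hψ.2 _ fun x => ?_
          have hx : ((1 - oR g) * h) x = ((1 - g x : ℝ) : ℂ) * h x := by
            simp only [ContinuousMap.mul_apply, ContinuousMap.sub_apply,
              ContinuousMap.one_apply, oR_apply]
            push_cast
            ring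
          rw [hx]
          exact mul_nonneg (Complex.zero_le_real.2 (by linarith [hg1 x])) (hh x)
    have hseg : ψ ∈ openSegment ℝ ψ₁ ψ₂ := by
      refine ⟨c, 1 - c, h0, h1c, by ring, ?_⟩
      rw [hψ₁, hψ₂, smul_smul, smul_smul, mul_inv_cancel₀ (ne_of_gt h0),
        mul_inv_cancel₀ (ne_of_gt h1c), one_smul, one_smul]
      abel
    have heq := (hext.2 hs₁ hs₂ hseg)
    have hev := congrArg (fun (χ : C(X, ℂ) →L[ℂ] ℂ) => χ f) heq
    rw [hψ₁app] at hev
    rw [hgc, ← hev, ← mul_assoc, ← Complex.ofReal_mul, mul_inv_cancel₀ (ne_of_gt h0)]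
    norm_num

lemma mulR (hψ : IsStateOnContinuousFunctions ψ)
    (hext : ψ ∈ Set.extremePoints ℝ {χ : C(X, ℂ) →L[ℂ] ℂ | IsStateOnContinuousFunctions χ})
    (g : C(X, ℝ)) (f : C(X, ℂ)) : ψ (oR g * f) = ψ (oR g) * ψ f := by
  set M : ℝ := ‖g‖ + 1 with hM
  have hM0 : 0 < M := by positivity
  have hbound : ∀ x, |g x| ≤ ‖g‖ := fun x => by
    simpa [Real.norm_eq_abs] using g.norm_coe_le_norm x
  set g' : C(X, ℝ) := (2 * M)⁻¹ • (g + ContinuousMap.const X M) with hg'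
  have hg'app : ∀ x, g' x = (2 * M)⁻¹ * (g x + M) := fun x => by
    simp [hg', ContinuousMap.smul_apply, ContinuousMap.add_apply]
    ring
  have hg'0 : ∀ x, 0 ≤ g' x := fun x => by
    rw [hg'app]
    have hml := (abs_le.mp (hbound x)).1
    apply mul_nonneg (by positivity)
    have : ‖g‖ ≤ M := by rw [hM]; linarith
    linarith
  have hg'1 : ∀ x, g' x ≤ 1 := fun x => by
    rw [hg'app]
    have h := abs_le.mp (hbound x)
    rw [inv_mul_le_iff₀ (by positivity), mul_one]
    have : ‖g‖ ≤ M := by rw [hM]; linarith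
    linarith [h.2]
  have key := mul01 hψ hext g' hg'0 hg'1
  set a : ℂ := ((2 * M : ℝ) : ℂ) with ha
  set b : ℂ := ((M : ℝ) : ℂ) with hb
  have hrel : oR g = a • oR g' - b • 1 := by
    ext x
    simp only [oR_apply, ContinuousMap.sub_apply, ContinuousMap.smul_apply,
      ContinuousMap.one_apply, smul_eq_mul, mul_one, ha, hb, hg'app]
    push_cast
    field_simp
    try ring
  have e1 : ψ (oR g * f) = a * ψ (oR g' * f) - b * ψ f := by
    rw [hrel, sub_mul, smul_mul_assoc, smul_mul_assoc, one_mul, map_sub, map_smul, map_smul,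
      smul_eq_mul, smul_eq_mul]
  have e2 : ψ (oR g) = a * ψ (oR g') - b := by
    rw [hrel, map_sub, map_smul, map_smul, hψ.1, smul_eq_mul, smul_eq_mul, mul_one]
  rw [e1, key f, e2]
  ring

lemma mulC (hψ : IsStateOnContinuousFunctions ψ)
    (hext : ψ ∈ Set.extremePoints ℝ {χ : C(X, ℂ) →L[ℂ] ℂ | IsStateOnContinuousFunctions χ})
    (a f : C(X, ℂ)) : ψ (a * f) = ψ a * ψ f := by
  have h1 : ψ (a * f) = ψ (oR (reC a) * f) + Complex.I * ψ (oR (imC a) * f) := by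
    conv_lhs => rw [decomp a]
    rw [add_mul, smul_mul_assoc, map_add, map_smul, smul_eq_mul]
  have h2 : ψ a = ψ (oR (reC a)) + Complex.I * ψ (oR (imC a)) := by
    conv_lhs => rw [decomp a]
    rw [map_add, map_smul, smul_eq_mul]
  rw [h1, mulR hψ hext, mulR hψ hext, h2]
  ring

lemma eval_of_vanish (hψ : IsStateOnContinuousFunctions ψ) (x : X)
    (hvan : ∀ g : C(X, ℝ), (∀ y, 0 ≤ g y) → g x = 0 → ψ (oR g) = 0) (f : C(X, ℂ)) :
    ψ f = f x := by
  have hvan' : ∀ g : C(X, ℝ), g x = 0 → ψ (oR g) = 0 := by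
    intro g hg
    have hsplit : oR g = oR (g ⊔ 0) - oR (-g ⊔ 0) := by
      ext y
      simp only [oR_apply, ContinuousMap.sub_apply, ContinuousMap.sup_apply,
        ContinuousMap.neg_apply, ContinuousMap.zero_apply]
      rw [← Complex.ofReal_sub, Complex.ofReal_inj]
      exact (max_zero_sub_eq_self (g y)).symm
    rw [hsplit, map_sub]
    rw [hvan (g ⊔ 0) (fun y => by simp) (by simp [ContinuousMap.sup_apply, hg]),
      hvan (-g ⊔ 0) (fun y => by simp) (by simp [ContinuousMap.sup_apply, hg])]
    simp
  set F : C(X, ℂ) := f - f x • 1 with hF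
  have hFx : F x = 0 := by simp [hF]
  have h1 : ψ F = ψ f - f x := by
    rw [hF, map_sub, map_smul, hψ.1, smul_eq_mul, mul_one]
  have h2 : ψ F = 0 := by
    conv_lhs => rw [decomp F]
    rw [map_add, map_smul, hvan' (reC F) (by simp [reC, hFx]), hvan' (imC F) (by simp [imC, hFx])]
    simp
  rw [h2] at h1
  exact sub_eq_zero.mp h1.symm

end StateAux


open StateAux in
set_option maxHeartbeats 1000000 in
/-- For a compact Hausdorff space `X`, the extreme points of the state space of `C(X, ℂ)`
are exactly the point evaluations. -/
theorem extremePoints_stateSpace_eq_point_evaluations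
    (X : Type*) [TopologicalSpace X] [CompactSpace X] [T2Space X]
    (φ : C(X, ℂ) →L[ℂ] ℂ) (hφ : IsStateOnContinuousFunctions φ) :
    φ ∈ Set.extremePoints ℝ {ψ : C(X, ℂ) →L[ℂ] ℂ | IsStateOnContinuousFunctions ψ} ↔
      ∃ x : X, ∀ f : C(X, ℂ), φ f = f x := by
  constructor
  · intro hext
    have hne0 : (φ : WeakDual ℂ C(X, ℂ)) ≠ 0 := by
      intro h
      have h1 := hφ.1
      rw [h] at h1
      simp at h1
    set χ : WeakDual.characterSpace ℂ C(X, ℂ) :=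
      ⟨φ, hne0, fun a b => mulC hφ hext a b⟩ with hχ
    obtain ⟨x, hx⟩ := (WeakDual.CharacterSpace.continuousMapEval_bijective X ℂ).2 χ
    refine ⟨x, fun f => ?_⟩
    have h2 := DFunLike.congr_fun hx f
    rw [WeakDual.CharacterSpace.continuousMapEval_apply_apply] at h2
    exact h2.symm
  · rintro ⟨x, hx⟩
    refine ⟨hφ, ?_⟩
    intro ψ₁ hs₁ ψ₂ hs₂ hseg
    obtain ⟨a, b, ha, hb, hab, hsum⟩ := hseg
    have key : ∀ ψ' : C(X, ℂ) →L[ℂ] ℂ, IsStateOnContinuousFunctions ψ' →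
        (∀ g : C(X, ℝ), (∀ y, 0 ≤ g y) → g x = 0 → ψ' (oR g) = 0) → ψ' = φ := by
      intro ψ' hs hv
      ext f
      rw [eval_of_vanish hs x hv f, hx f]
    have hvan : ∀ g : C(X, ℝ), (∀ y, 0 ≤ g y) → g x = 0 →
        ψ₁ (oR g) = 0 ∧ ψ₂ (oR g) = 0 := by
      intro g hg hgx
      have h0 : φ (oR g) = 0 := by rw [hx]; simp [hgx]
      set z₁ := ψ₁ (oR g) with hz₁
      set z₂ := ψ₂ (oR g) with hz₂
      have hsum' : (a : ℂ) * z₁ + (b : ℂ) * z₂ = 0 := by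
        have h := congrArg (fun χ : C(X, ℂ) →L[ℂ] ℂ => χ (oR g)) hsum
        simp only [ContinuousLinearMap.add_apply, ContinuousLinearMap.coe_smul',
          Pi.smul_apply, Complex.real_smul] at h
        rw [← hz₁, ← hz₂] at h
        rw [h, h0]
      have p1 := Complex.le_def.mp (pos_oR hs₁ g hg)
      have p2 := Complex.le_def.mp (pos_oR hs₂ g hg)
      rw [← hz₁] at p1
      rw [← hz₂] at p2
      simp only [Complex.zero_re, Complex.zero_im] at p1 p2
      have i1 : z₁.im = 0 := p1.2.symm
      have i2 : z₂.im = 0 := p2.2.symm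
      have hsre := congrArg Complex.re hsum'
      simp only [Complex.add_re, Complex.mul_re, Complex.ofReal_re, Complex.ofReal_im,
        Complex.zero_re, i1, i2, mul_zero, zero_mul, sub_zero] at hsre
      have q1 := mul_nonneg ha.le p1.1
      have q2 := mul_nonneg hb.le p2.1
      have hr1 : z₁.re = 0 := by
        have : a * z₁.re = 0 := by linarith
        exact (mul_eq_zero.mp this).resolve_left (ne_of_gt ha)
      have hr2 : z₂.re = 0 := by
        have : b * z₂.re = 0 := by linarith
        exact (mul_eq_zero.mp this).resolve_left (ne_of_gt hb)
      constructor
      · rw [Complex.ext_iff]; exact ⟨hr1, by simpa using i1⟩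
      · rw [Complex.ext_iff]; exact ⟨hr2, by simpa using i2⟩
    exact key ψ₁ hs₁ (fun g hg hgx => (hvan g hg hgx).1)
end
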